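/- arXiv:1102.2835 — 2 statements merged into one kernel-verified Lean document; each statement's English description precedes it below -/
import Mathlib

section
/- The space of sections of an integrable multi-Dirac structure D of degree n forms a Gerstenhaber algebra: the multi-Courant bracket is graded anti-commutative ([[(Γ,Σ),(Γ',Σ')]] = −(-1)^{(r-1)(s-1)}[[(Γ',Σ'),(Γ,Σ)]]), satisfies the graded Leibniz identity with respect to the wedge product ([[(Γ,Σ),(Γ',Σ')∧(Γ'',Σ'')]] = [[(Γ,Σ),(Γ',Σ')]]∧(Γ'',Σ'') + (-1)^{(r-1)s}(Γ',Σ')∧[[(Γ,Σ),(Γ'',Σ'')]]), and satisfies the graded Jacobi identity. -/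
noncomputable section

/-- An abstract model of the calculus of multivector fields and differential
forms on a smooth manifold `Z`:  `A` plays the role of the ring of smooth
functions `C^∞(Z)`, `X` the space of (inhomogeneous) multivector fields, and
`F` the space of (inhomogeneous) differential forms.  The submodules `MV k`
and `Fm k` are the multivector fields and forms of pure degree `k`; `wedge`
is the exterior product of multivector fields, `sch` the Schouten–Nijenhuis
bracket, `iota` the contraction (interior product) of a multivector field
with a form (for decomposable `Γ = X₁ ∧ ⋯ ∧ X_k`,
`iota Γ α = i_{X_k} ⋯ i_{X_1} α`), and `d` the exterior derivative. -/
structure MultiCalc (A X F : Type) [CommRing A] [Algebra ℝ A]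
    [AddCommGroup X] [AddCommGroup F] [Module ℝ X] [Module ℝ F]
    [Module A X] [Module A F] [IsScalarTower ℝ A X] [IsScalarTower ℝ A F] where
  MV : ℕ → Submodule A X
  Fm : ℕ → Submodule A F
  wedge : X → X → X
  sch : X → X → X
  iota : X → F → F
  d : F → F
  wedge_add_left : ∀ a b c, wedge (a + b) c = wedge a c + wedge b c
  wedge_add_right : ∀ a b c, wedge a (b + c) = wedge a b + wedge a c
  wedge_smul_left : ∀ (f : A) a b, wedge (f • a) b = f • wedge a b
  wedge_smul_right : ∀ (f : A) a b, wedge a (f • b) = f • wedge a b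
  iota_add_left : ∀ a b α, iota (a + b) α = iota a α + iota b α
  iota_add_right : ∀ a α β, iota a (α + β) = iota a α + iota a β
  iota_smul_left : ∀ (f : A) a α, iota (f • a) α = f • iota a α
  iota_smul_right : ∀ (f : A) a α, iota a (f • α) = f • iota a α
  sch_add_left : ∀ a b c, sch (a + b) c = sch a c + sch b c
  sch_add_right : ∀ a b c, sch a (b + c) = sch a b + sch a c
  sch_smul_left : ∀ (c : ℝ) a b, sch (c • a) b = c • sch a b
  sch_smul_right : ∀ (c : ℝ) a b, sch a (c • b) = c • sch a b
  d_add : ∀ α β, d (α + β) = d α + d β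
  d_smul : ∀ (c : ℝ) α, d (c • α) = c • d α
  d_d : ∀ α, d (d α) = 0
  wedge_mem : ∀ {r s : ℕ} {a b}, a ∈ MV r → b ∈ MV s → wedge a b ∈ MV (r + s)
  sch_mem : ∀ {r s : ℕ} {a b}, a ∈ MV r → b ∈ MV s → sch a b ∈ MV (r + s - 1)
  iota_mem : ∀ {r k : ℕ} {a α}, a ∈ MV r → α ∈ Fm k → iota a α ∈ Fm (k - r)
  iota_zero_of_lt : ∀ {r k : ℕ} {a α}, a ∈ MV r → α ∈ Fm k → k < r → iota a α = 0
  d_mem : ∀ {k : ℕ} {α}, α ∈ Fm k → d α ∈ Fm (k + 1)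
  /-- `i_{Γ ∧ Γ'} = i_{Γ'} ∘ i_Γ` -/
  iota_wedge : ∀ {r s : ℕ} {a b}, a ∈ MV r → b ∈ MV s →
    ∀ α, iota (wedge a b) α = iota b (iota a α)
  /-- graded commutativity of contractions -/
  iota_comm : ∀ {r s : ℕ} {a b}, a ∈ MV r → b ∈ MV s →
    ∀ α, iota a (iota b α) = ((-1:ℝ)^(r*s)) • iota b (iota a α)
  /-- the Koszul identity `i_{[Γ,Γ']} α = (-1)^{(k-1)l} £_Γ i_{Γ'} α − i_{Γ'} £_Γ α`,
  written out using `£_Γ α = d i_Γ α − (-1)^k i_Γ dα`. -/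
  koszul : ∀ {k l : ℕ} {a b}, a ∈ MV k → b ∈ MV l → ∀ α,
    iota (sch a b) α =
      ((-1:ℝ)^((k-1)*l)) •
        (d (iota a (iota b α)) - ((-1:ℝ)^k) • iota a (d (iota b α)))
      - iota b (d (iota a α) - ((-1:ℝ)^k) • iota a (d α))
  /-- graded anticommutativity of the Schouten–Nijenhuis bracket -/
  sch_comm : ∀ {k l : ℕ} {a b}, a ∈ MV k → b ∈ MV l →
    sch a b = -(((-1:ℝ)^((k-1)*(l-1))) • sch b a)
  /-- graded Leibniz rule for the Schouten–Nijenhuis bracket -/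
  sch_leibniz : ∀ {k l m : ℕ} {a b c}, a ∈ MV k → b ∈ MV l → c ∈ MV m →
    sch a (wedge b c) = wedge (sch a b) c + ((-1:ℝ)^((k-1)*l)) • wedge b (sch a c)
  /-- graded Jacobi identity for the Schouten–Nijenhuis bracket -/
  sch_jacobi : ∀ {k l m : ℕ} {a b c}, a ∈ MV k → b ∈ MV l → c ∈ MV m →
    ((-1:ℝ)^((k-1)*(m-1))) • sch a (sch b c)
      + ((-1:ℝ)^((l-1)*(k-1))) • sch b (sch c a)
      + ((-1:ℝ)^((m-1)*(l-1))) • sch c (sch a b) = 0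
  /-- contraction is a nondegenerate pairing of multivector fields with forms -/
  iota_nondeg : ∀ {k r : ℕ} {α}, α ∈ Fm k → 1 ≤ r → r ≤ k →
    (∀ a ∈ MV r, iota a α = 0) → α = 0

namespace MultiCalc

variable {A X F : Type} [CommRing A] [Algebra ℝ A]
  [AddCommGroup X] [AddCommGroup F] [Module ℝ X] [Module ℝ F]
  [Module A X] [Module A F] [IsScalarTower ℝ A X] [IsScalarTower ℝ A F]
variable (C : MultiCalc A X F)

/-- generalized Lie derivative along a multivector field of degree `k`:
`£_Γ α = d i_Γ α − (-1)^k i_Γ dα` -/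
def lie (k : ℕ) (a : X) (α : F) : F :=
  C.d (C.iota a α) - ((-1:ℝ)^k) • C.iota a (C.d α)

/-- graded symmetric pairing `⟨⟨·,·⟩⟩₊` on `L_r × L_s` -/
def pairPlus (r s : ℕ) (p q : X × F) : F :=
  (1/2 : ℝ) • (C.iota q.1 p.2 + ((-1:ℝ)^(r*s)) • C.iota p.1 q.2)

/-- graded antisymmetric pairing `⟨⟨·,·⟩⟩₋` on `L_r × L_s` -/
def pairMinus (r s : ℕ) (p q : X × F) : F :=
  (1/2 : ℝ) • (C.iota q.1 p.2 - ((-1:ℝ)^(r*s)) • C.iota p.1 q.2)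

/-- the multi-Courant bracket on sections of `L_r × L_s` -/
def courant (r s : ℕ) (p q : X × F) : X × F :=
  (C.sch p.1 q.1,
    ((-1:ℝ)^((r-1)*s)) • C.lie r p.1 q.2 + ((-1:ℝ)^s) • C.lie s q.1 p.2
      - ((-1:ℝ)^s) • C.d (C.pairPlus r s p q))

/-- the graded wedge product of sections of `L_r × L_s` -/
def wedgeP (r s : ℕ) (p q : X × F) : X × F :=
  (C.wedge p.1 q.1, C.pairPlus r s p q)

/-- `L_r = ⋀^r(TZ) ×_Z ⋀^{n+1-r}(T^*Z)` -/
def Lset (n r : ℕ) : Set (X × F) := {p | p.1 ∈ C.MV r ∧ p.2 ∈ C.Fm (n + 1 - r)}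

/-- the `s`-orthogonal complement of `V ⊆ L_r` with respect to `⟨⟨·,·⟩⟩₋` -/
def orthC (n r : ℕ) (V : Set (X × F)) (s : ℕ) : Set (X × F) :=
  {q ∈ C.Lset n s | ∀ p ∈ V, C.pairMinus r s p q = 0}

/-- a multi-Dirac structure of degree `n`: subbundles `D r ⊆ L_r` that are
maximally isotropic, i.e. `(D r)^{⊥,s} = D s` whenever `r + s ≤ n + 1` -/
structure IsMultiDirac (n : ℕ) (D : ℕ → Set (X × F)) : Prop where
  subset : ∀ r, 1 ≤ r → r ≤ n → D r ⊆ C.Lset n r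
  orth : ∀ r s, 1 ≤ r → 1 ≤ s → r + s ≤ n + 1 → C.orthC n r (D r) s = D s

/-- integrability: sections of `D` are closed under the multi-Courant bracket -/
def Integrable (n : ℕ) (D : ℕ → Set (X × F)) : Prop :=
  ∀ r s, 1 ≤ r → 1 ≤ s → r + s ≤ n + 1 →
    ∀ p ∈ D r, ∀ q ∈ D s, C.courant r s p q ∈ D (r + s - 1)

/-- the integrability tensor `T_D = 2 ⟨⟨·, [[·,·]]⟩⟩₋` -/
def TD (r s t : ℕ) (p q w : X × F) : F :=
  (2:ℝ) • C.pairMinus r (s + t - 1) p (C.courant s t q w)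

/-- the Jacobiator of the multi-Courant bracket -/
def jacobiator (r s t : ℕ) (p q w : X × F) : X × F :=
  C.courant r (s + t - 1) p (C.courant s t q w)
    + ((-1:ℝ)^((t-1)*(r+s))) • C.courant t (r + s - 1) w (C.courant r s p q)
    + ((-1:ℝ)^((r-1)*(s+t))) • C.courant s (t + r - 1) q (C.courant t r w p)

/-- the gauge transformation `Φ_σ (Γ, Σ) = (Γ, Σ + i_Γ σ)` -/
def gauge (σ : F) (p : X × F) : X × F := (p.1, p.2 + C.iota p.1 σ)

/-- the graph `{(Γ, i_Γ Ω)}` of a differential form `Ω` -/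
def graphD (Ω : F) (r : ℕ) : Set (X × F) := {p | p.1 ∈ C.MV r ∧ p.2 = C.iota p.1 Ω}

/-- the multi-Poisson bracket `{Σ, Σ'} = −(-1)^{|Σ|} i_{Γ_{Σ'}} dΣ`, written as a
function of the degree `k = |Σ|`, the form `Σ`, and a multivector field
`Γ_{Σ'}` associated with `Σ'` -/
def pb (k : ℕ) (α : F) (g : X) : F := -(((-1:ℝ)^k) • C.iota g (C.d α))

/-- an `(n-r)`-form `Σ` is admissible if `(Γ_Σ, dΣ) ∈ D_r` for some
`r`-multivector field `Γ_Σ` -/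
def Admissible (n : ℕ) (D : ℕ → Set (X × F)) (r : ℕ) (α : F) : Prop :=
  α ∈ C.Fm (n - r) ∧ ∃ g ∈ C.MV r, (g, C.d α) ∈ D r

/-- the form `Ω_D(v_1, …, v_n) := α_n(v_1, …, v_{n-1})` associated with `D_1`,
for sections `(v_i, α_i)` of `D_1` and `n = m + 1` -/
def OmD (m : ℕ) (p : Fin (m+1) → X × F) : F :=
  (List.ofFn fun i : Fin m => (p i.castSucc).1).foldl
    (fun β v => C.iota v β) (p (Fin.last m)).2

end MultiCalc

lemma eps_eval (e : ℕ) : ((-1:ℝ))^e = if Even e then 1 else -1 := by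
  rcases Nat.even_or_odd e with h|h
  · simp [h, h.neg_one_pow]
  · simp [h.neg_one_pow, Nat.not_even_iff_odd.mpr h]

namespace MultiCalc

variable {A X F : Type} [CommRing A] [Algebra ℝ A]
  [AddCommGroup X] [AddCommGroup F] [Module ℝ X] [Module ℝ F]
  [Module A X] [Module A F] [IsScalarTower ℝ A X] [IsScalarTower ℝ A F]
variable (C : MultiCalc A X F)

lemma iota_smul_real (c : ℝ) (a : X) (α : F) : C.iota a (c • α) = c • C.iota a α := by
  rw [← algebraMap_smul A c α, C.iota_smul_right, algebraMap_smul]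

lemma iota_sub_right (a : X) (α β : F) : C.iota a (α - β) = C.iota a α - C.iota a β := by
  rw [sub_eq_add_neg, C.iota_add_right, ← neg_one_smul ℝ β, C.iota_smul_real,
    neg_one_smul, ← sub_eq_add_neg]

lemma iota_neg_right (a : X) (α : F) : C.iota a (-α) = -C.iota a α := by
  rw [← neg_one_smul ℝ α, C.iota_smul_real, neg_one_smul]

lemma iota_zero_right (a : X) : C.iota a (0 : F) = 0 := by
  have := C.iota_smul_real 0 a 0; simpa using this

lemma d_sub (α β : F) : C.d (α - β) = C.d α - C.d β := by
  rw [sub_eq_add_neg, C.d_add, ← neg_one_smul ℝ β, C.d_smul, neg_one_smul, ← sub_eq_add_neg]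

lemma d_neg (α : F) : C.d (-α) = -C.d α := by
  rw [← neg_one_smul ℝ α, C.d_smul, neg_one_smul]

lemma d_zero : C.d (0 : F) = 0 := by
  have := C.d_smul 0 0; simpa using this

lemma iso {n : ℕ} {D : ℕ → Set (X × F)} (hD : C.IsMultiDirac n D)
    {u v : ℕ} (hu : 1 ≤ u) (hv : 1 ≤ v) (huv : u + v ≤ n + 1)
    {P Q : X × F} (hP : P ∈ D u) (hQ : Q ∈ D v) :
    C.iota Q.1 P.2 = ((-1:ℝ)^(u*v)) • C.iota P.1 Q.2 := by
  have hQ' : Q ∈ C.orthC n u (D u) v := by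
    rw [hD.orth u v hu hv huv]; exact hQ
  have h3 : C.pairMinus u v P Q = 0 := hQ'.2 P hP
  unfold MultiCalc.pairMinus at h3
  have h4 := congrArg (fun z : F => (2:ℝ) • z) h3
  simp only [smul_smul, smul_zero] at h4
  norm_num at h4
  exact sub_eq_zero.mp h4


lemma courant_anticomm {n : ℕ} {D : ℕ → Set (X × F)} (hD : C.IsMultiDirac n D)
    (k l : ℕ) (hsum : (k+1) + (l+1) ≤ n + 1) {p q : X × F}
    (hp : p ∈ D (k+1)) (hq : q ∈ D (l+1)) :
    C.courant (k+1) (l+1) p q = -(((-1:ℝ)^(k*l)) • C.courant (l+1) (k+1) q p) := by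
  have ha := (hD.subset _ (by omega) (by omega) hp).1
  have hb := (hD.subset _ (by omega) (by omega) hq).1
  rw [Prod.ext_iff]
  constructor
  · have h := C.sch_comm ha hb
    simp only [Nat.add_sub_cancel] at h
    simpa [MultiCalc.courant] using h
  · simp only [MultiCalc.courant, MultiCalc.lie, MultiCalc.pairPlus, Nat.add_sub_cancel,
      Prod.snd_neg, Prod.smul_snd, smul_add, smul_sub, smul_smul,
      C.d_add, C.d_smul, C.d_sub, C.iota_add_right, C.iota_smul_real, C.iota_sub_right]
    by_cases hk : Even k <;> by_cases hl : Even l <;>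
      · simp [eps_eval, Nat.even_add, Nat.even_mul, hk, hl,
          (by decide : ¬ Even 1), (by decide : Even 2)]
        module


set_option maxHeartbeats 3200000 in
lemma courant_leibniz {n : ℕ} {D : ℕ → Set (X × F)} (hD : C.IsMultiDirac n D)
    (k l m : ℕ) (hsum : (k+1) + (l+1) + (m+1) ≤ n + 1) {p q w : X × F}
    (hp : p ∈ D (k+1)) (hq : q ∈ D (l+1)) (hw : w ∈ D (m+1)) :
    C.courant (k+1) ((l+1) + (m+1)) p (C.wedgeP (l+1) (m+1) q w) =
      C.wedgeP ((k+1) + (l+1) - 1) (m+1) (C.courant (k+1) (l+1) p q) w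
        + ((-1:ℝ)^(((k+1)-1)*(l+1))) • C.wedgeP (l+1) ((k+1) + (m+1) - 1) q
            (C.courant (k+1) (m+1) p w) := by
  have ha := (hD.subset _ (by omega) (by omega) hp).1
  have hb := (hD.subset _ (by omega) (by omega) hq).1
  have hc := (hD.subset _ (by omega) (by omega) hw).1
  have hpq := C.iso hD (by omega) (by omega) (by omega) hp hq
  have hqw := C.iso hD (by omega) (by omega) (by omega) hq hw
  have hpw := C.iso hD (by omega) (by omega) (by omega) hp hw
  have h1 := congrArg (fun z : F => C.d (C.iota w.1 z)) hpq
  have h2 := congrArg (fun z : F => C.iota w.1 (C.d z)) hpq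
  have h3 := congrArg (fun z : F => C.d (C.iota p.1 z)) hqw
  have h4 := congrArg (fun z : F => C.iota q.1 (C.d z)) hpw
  rw [Prod.ext_iff]
  constructor
  · have h := C.sch_leibniz ha hb hc
    simp only [Nat.add_sub_cancel] at h ⊢
    simpa [MultiCalc.courant, MultiCalc.wedgeP] using h
  · simp only [show (k+1) + (l+1) - 1 = k+l+1 from by omega,
      show (k+1) + (m+1) - 1 = k+m+1 from by omega,
      MultiCalc.courant, MultiCalc.lie, MultiCalc.pairPlus, MultiCalc.wedgeP,
      Nat.add_sub_cancel,
      Prod.snd_add, Prod.smul_snd, Prod.fst_add, Prod.smul_fst,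
      C.koszul ha hb, C.koszul ha hc,
      C.iota_wedge hb hc,
      C.iota_comm hc hb, C.iota_comm hb ha, C.iota_comm hc ha,
      smul_add, smul_sub, smul_smul, smul_zero, add_zero, zero_add,
      C.d_add, C.d_smul, C.d_sub, C.d_d, C.d_zero,
      C.iota_add_right, C.iota_smul_real, C.iota_sub_right, C.iota_zero_right]
      at h1 h2 h3 h4 ⊢
    linear_combination (norm := (match_scalars <;>
        (by_cases hk : Even k <;> by_cases hl : Even l <;> by_cases hm : Even m <;>
          simp [eps_eval, Nat.even_add, Nat.even_mul, hk, hl, hm,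
            (by decide : ¬ Even 1), (by decide : Even 2)] <;> ring_nf)))
      ((1/2:ℝ) * (-1:ℝ)^(l+m)) • h1 + ((1/4:ℝ) * (-1:ℝ)^l) • h2
        + ((1/4:ℝ) * (-1:ℝ)^(k*(l+m))) • h3 - ((1/4:ℝ) * (-1:ℝ)^(l*(m+1))) • h4


set_option maxHeartbeats 6400000 in
lemma courant_jacobi {n : ℕ} {D : ℕ → Set (X × F)} (hD : C.IsMultiDirac n D)
    (hInt : C.Integrable n D)
    (k l m : ℕ) (hsum : (k+1) + (l+1) + (m+1) ≤ n + 1) {p q w : X × F}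
    (hp : p ∈ D (k+1)) (hq : q ∈ D (l+1)) (hw : w ∈ D (m+1)) :
    C.jacobiator (k+1) (l+1) (m+1) p q w = 0 := by
  have ha := (hD.subset _ (by omega) (by omega) hp).1
  have hb := (hD.subset _ (by omega) (by omega) hq).1
  have hc := (hD.subset _ (by omega) (by omega) hw).1
  have hpq := C.iso hD (by omega) (by omega) (by omega) hp hq
  have hpw := C.iso hD (by omega) (by omega) (by omega) hp hw
  have hZ := hInt (l+1) (m+1) (by omega) (by omega) (by omega) q hq w hw
  rw [show (l+1) + (m+1) - 1 = l+m+1 from by omega] at hZ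
  have hpZ := C.iso hD (u := k+1) (v := l+m+1) (by omega) (by omega) (by omega) hp hZ
  have h1 := congrArg (fun z : F => C.d (C.iota w.1 (C.d z))) hpq
  have h2 := congrArg (fun z : F => C.d (C.iota q.1 (C.d z))) hpw
  have h3 := congrArg C.d hpZ
  rw [Prod.ext_iff]
  constructor
  · have hjac := C.sch_jacobi ha hb hc
    simp only [Nat.add_sub_cancel] at hjac
    simp only [MultiCalc.jacobiator, MultiCalc.courant,
      show (l+1) + (m+1) - 1 = l+m+1 from by omega,
      show (k+1) + (l+1) - 1 = k+l+1 from by omega,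
      show (m+1) + (k+1) - 1 = m+k+1 from by omega,
      Nat.add_sub_cancel, Prod.fst_add, Prod.smul_fst, Prod.fst_zero]
    linear_combination (norm := (match_scalars <;>
        (by_cases hk : Even k <;> by_cases hl : Even l <;> by_cases hm : Even m <;>
          simp [eps_eval, Nat.even_add, Nat.even_mul, hk, hl, hm,
            (by decide : ¬ Even 1), (by decide : Even 2)] <;> ring_nf)))
      ((-1:ℝ)^(k*m)) • hjac
  · simp only [MultiCalc.jacobiator, MultiCalc.courant, MultiCalc.lie, MultiCalc.pairPlus,
      show (l+1) + (m+1) - 1 = l+m+1 from by omega,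
      show (k+1) + (l+1) - 1 = k+l+1 from by omega,
      show (m+1) + (k+1) - 1 = m+k+1 from by omega,
      Nat.add_sub_cancel,
      Prod.snd_add, Prod.smul_snd, Prod.fst_add, Prod.smul_fst, Prod.snd_zero,
      C.koszul hb hc, C.koszul ha hb, C.koszul hc ha,
      C.iota_comm hc hb, C.iota_comm hb ha, C.iota_comm hc ha,
      smul_add, smul_sub, smul_smul, smul_zero, add_zero, zero_add,
      C.d_add, C.d_smul, C.d_sub, C.d_d, C.d_zero,
      C.iota_add_right, C.iota_smul_real, C.iota_sub_right, C.iota_zero_right]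
      at h1 h2 h3 ⊢
    linear_combination (norm := (match_scalars <;>
        (by_cases hk : Even k <;> by_cases hl : Even l <;> by_cases hm : Even m <;>
          simp [eps_eval, Nat.even_add, Nat.even_mul, hk, hl, hm,
            (by decide : ¬ Even 1), (by decide : Even 2)] <;> ring_nf)))
      (-(1/4:ℝ) * (-1:ℝ)^(l+m)) • h1 + ((1/4:ℝ) * (-1:ℝ)^(l+m+l*m)) • h2
        - ((1/2:ℝ) * (-1:ℝ)^(l+m)) • h3


end MultiCalc

/-- The space of sections of an integrable multi-Dirac structure forms a
Gerstenhaber algebra: the multi-Courant bracket is graded anticommutative,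
satisfies the graded Leibniz identity with respect to the wedge product, and
satisfies the graded Jacobi identity. -/
theorem multiDirac_gerstenhaber {A X F : Type} [CommRing A] [Algebra ℝ A]
    [AddCommGroup X] [AddCommGroup F] [Module ℝ X] [Module ℝ F]
    [Module A X] [Module A F] [IsScalarTower ℝ A X] [IsScalarTower ℝ A F]
    (C : MultiCalc A X F)
    (n : ℕ) (D : ℕ → Set (X × F)) (hD : C.IsMultiDirac n D)
    (hInt : C.Integrable n D)
    (r s t : ℕ) (hr : 1 ≤ r) (hs : 1 ≤ s) (ht : 1 ≤ t)
    (hsum : r + s + t ≤ n + 1)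
    (p q w : X × F) (hp : p ∈ D r) (hq : q ∈ D s) (hw : w ∈ D t) :
    C.courant r s p q = -(((-1:ℝ)^((r-1)*(s-1))) • C.courant s r q p) ∧
      C.courant r (s + t) p (C.wedgeP s t q w) =
        C.wedgeP (r + s - 1) t (C.courant r s p q) w
          + ((-1:ℝ)^((r-1)*s)) • C.wedgeP s (r + t - 1) q (C.courant r t p w) ∧
      C.jacobiator r s t p q w = 0 := by
  obtain ⟨k, rfl⟩ : ∃ k, r = k + 1 := ⟨r - 1, by omega⟩
  obtain ⟨l, rfl⟩ : ∃ l, s = l + 1 := ⟨s - 1, by omega⟩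
  obtain ⟨m, rfl⟩ : ∃ m, t = m + 1 := ⟨t - 1, by omega⟩
  refine ⟨?_, ?_, ?_⟩
  · simpa only [Nat.add_sub_cancel] using
      C.courant_anticomm hD k l (by omega) hp hq
  · simpa only [Nat.add_sub_cancel] using
      C.courant_leibniz hD k l m (by omega) hp hq hw
  · exact C.courant_jacobi hD hInt k l m (by omega) hp hq hw
end
end

section
/- Let D = D_1 ⊕ ⋯ ⊕ D_n be a multi-Dirac structure and define Ω_D on sections of D_1 by Ω_D(v_1,…,v_n) := α_n(v_1,…,v_{n-1}) for sections (v_1,α_1),…,(v_n,α_n) of D_1 ⊂ TZ ⊕ ⋀^n(T*Z). Then Ω_D is totally antisymmetric in its n arguments. -/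
noncomputable section

namespace MultiCalc

variable {A X F : Type} [CommRing A] [Algebra ℝ A]
  [AddCommGroup X] [AddCommGroup F] [Module ℝ X] [Module ℝ F]
  [Module A X] [Module A F] [IsScalarTower ℝ A X] [IsScalarTower ℝ A F]
variable (C : MultiCalc A X F)

/-- iterated contraction along a tuple of multivector fields -/
def Wf {m : ℕ} (v : Fin m → X) (β : F) : F :=
  (List.ofFn v).foldl (fun β a => C.iota a β) β

lemma iota_rsmul (a : X) (c : ℝ) (α : F) : C.iota a (c • α) = c • C.iota a α := by
  have h1 : c • α = (c • (1 : A)) • α := by rw [smul_assoc, one_smul]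
  have h2 : c • C.iota a α = (c • (1 : A)) • C.iota a α := by rw [smul_assoc, one_smul]
  rw [h1, C.iota_smul_right, h2]

lemma Wf_nil (v : Fin 0 → X) (β : F) : C.Wf v β = β := by simp [Wf]

lemma Wf_succ {m : ℕ} (v : Fin (m + 1) → X) (β : F) :
    C.Wf v β = C.Wf (v ∘ Fin.succ) (C.iota (v 0) β) := by
  rw [Wf, List.ofFn_succ]
  rfl

lemma Wf_last {m : ℕ} (v : Fin (m + 1) → X) (β : F) :
    C.Wf v β = C.iota (v (Fin.last m)) (C.Wf (v ∘ Fin.castSucc) β) := by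
  rw [Wf, List.ofFn_succ', List.concat_eq_append, List.foldl_append]
  rfl

lemma Wf_smul (c : ℝ) : ∀ {m : ℕ} (v : Fin m → X) (β : F),
    C.Wf v (c • β) = c • C.Wf v β := by
  intro m
  induction m with
  | zero => intro v β; simp [Wf_nil]
  | succ n ih => intro v β; rw [Wf_succ, Wf_succ, C.iota_rsmul, ih]

lemma Wf_neg {m : ℕ} (v : Fin m → X) (β : F) : C.Wf v (-β) = - C.Wf v β := by
  have := C.Wf_smul (-1) v β
  simpa using this

lemma iota_Wf (a : X) (ha : a ∈ C.MV 1) :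
    ∀ {m : ℕ} (v : Fin m → X), (∀ i, v i ∈ C.MV 1) → ∀ β,
      C.iota a (C.Wf v β) = ((-1 : ℝ) ^ m) • C.Wf v (C.iota a β) := by
  intro m
  induction m with
  | zero => intro v hv β; simp [Wf_nil]
  | succ n ih =>
    intro v hv β
    rw [Wf_succ, Wf_succ, ih (v ∘ Fin.succ) (fun i => hv i.succ),
      C.iota_comm ha (hv 0) β, Wf_smul, smul_smul]
    congr 1
    ring

lemma Wf_swap_adj : ∀ (k : ℕ) {m : ℕ} (hk : k + 1 < m) (v : Fin m → X),
    (∀ i, v i ∈ C.MV 1) → ∀ β,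
    C.Wf (v ∘ Equiv.swap ⟨k, by omega⟩ ⟨k + 1, hk⟩) β = - C.Wf v β := by
  intro k
  induction k with
  | zero =>
    intro m hk v hv β
    obtain ⟨m, rfl⟩ : ∃ m', m = m' + 2 := ⟨m - 2, by omega⟩
    set s := Equiv.swap (⟨0, by omega⟩ : Fin (m + 2)) ⟨1, hk⟩ with hs
    have e1 : ((v ∘ s) ∘ Fin.succ) ∘ Fin.succ = (v ∘ Fin.succ) ∘ Fin.succ := by
      funext i
      simp only [Function.comp_apply, hs]
      congr 1
    have e2 : (v ∘ s) 0 = v ⟨1, hk⟩ := by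
      simp only [Function.comp_apply, hs]
      congr 1
    have e3 : ((v ∘ s) ∘ Fin.succ) 0 = v ⟨0, by omega⟩ := by
      simp only [Function.comp_apply, hs]
      congr 1
    have e4 : (v ∘ Fin.succ) 0 = v ⟨1, hk⟩ := by
      simp only [Function.comp_apply]
      congr 1
    have e5 : (v : Fin (m + 2) → X) 0 = v ⟨0, by omega⟩ := rfl
    rw [C.Wf_succ (v ∘ s), C.Wf_succ ((v ∘ s) ∘ Fin.succ), C.Wf_succ v,
      C.Wf_succ (v ∘ Fin.succ), e1, e2, e3, e4, e5,
      C.iota_comm (hv ⟨0, by omega⟩) (hv ⟨1, hk⟩), Wf_smul]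
    norm_num
  | succ k ih =>
    intro m hk v hv β
    obtain ⟨m, rfl⟩ : ∃ m', m = m' + 1 := ⟨m - 1, by omega⟩
    have hk' : k + 1 < m := by omega
    set s := Equiv.swap (⟨k + 1, by omega⟩ : Fin (m + 1)) ⟨k + 2, hk⟩ with hs
    have e0 : (v ∘ s) 0 = v 0 := by
      simp only [Function.comp_apply, hs]
      congr 1
    have e1 : (v ∘ s) ∘ Fin.succ =
        (v ∘ Fin.succ) ∘ Equiv.swap (⟨k, by omega⟩ : Fin m) ⟨k + 1, hk'⟩ := by
      funext i
      simp only [Function.comp_apply, hs]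
      congr 1
      rcases eq_or_ne i ⟨k, by omega⟩ with rfl | h1
      · rw [Equiv.swap_apply_left]
        have h0 : Fin.succ (⟨k, by omega⟩ : Fin m) = ⟨k + 1, by omega⟩ := by
          simp [Fin.ext_iff]
        rw [h0, Equiv.swap_apply_left]
        simp [Fin.ext_iff]
      · rcases eq_or_ne i ⟨k + 1, hk'⟩ with rfl | h2
        · rw [Equiv.swap_apply_right]
          have h0 : Fin.succ (⟨k + 1, hk'⟩ : Fin m) = ⟨k + 2, by omega⟩ := by
            simp [Fin.ext_iff]
          rw [h0, Equiv.swap_apply_right]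
          simp [Fin.ext_iff]
        · have h1' : Fin.succ i ≠ ⟨k + 1, by omega⟩ := by
            simp only [ne_eq, Fin.ext_iff, Fin.val_succ] at h1 ⊢
            omega
          have h2' : Fin.succ i ≠ ⟨k + 2, hk⟩ := by
            simp only [ne_eq, Fin.ext_iff, Fin.val_succ] at h2 ⊢
            omega
          rw [Equiv.swap_apply_of_ne_of_ne h1 h2,
            Equiv.swap_apply_of_ne_of_ne h1' h2']
    rw [C.Wf_succ (v ∘ s), C.Wf_succ v, e0, e1,
      ih hk' (v ∘ Fin.succ) (fun i => hv i.succ)]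

lemma OmD_eq_Wf (m : ℕ) (p : Fin (m + 1) → X × F) :
    C.OmD m p = C.Wf (fun i : Fin m => (p i.castSucc).1) (p (Fin.last m)).2 := rfl

lemma isotropy {m : ℕ} {D : ℕ → Set (X × F)} (hD : C.IsMultiDirac (m + 1) D)
    {p q : X × F} (hp : p ∈ D 1) (hq : q ∈ D 1) :
    C.iota q.1 p.2 = - C.iota p.1 q.2 := by
  have horth := hD.orth 1 1 le_rfl le_rfl (by omega)
  have hq' : q ∈ C.orthC (m + 1) 1 (D 1) 1 := by rw [horth]; exact hq
  have h0 := hq'.2 p hp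
  unfold pairMinus at h0
  have h1 : C.iota q.1 p.2 - ((-1 : ℝ) ^ (1 * 1)) • C.iota p.1 q.2 = 0 := by
    have h2 := congrArg (fun x : F => (2 : ℝ) • x) h0
    simpa [smul_smul] using h2
  have h3 : C.iota q.1 p.2 + C.iota p.1 q.2 = 0 := by
    simpa [sub_neg_eq_add] using h1
  exact eq_neg_of_add_eq_zero_left h3

lemma OmD_swap_adj {m : ℕ} {D : ℕ → Set (X × F)} (hD : C.IsMultiDirac (m + 1) D)
    (k : ℕ) (hk : k + 1 < m + 1)
    (q : Fin (m + 1) → X × F) (hq : ∀ i, q i ∈ D 1) :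
    C.OmD m (q ∘ Equiv.swap ⟨k, by omega⟩ ⟨k + 1, hk⟩) = - C.OmD m q := by
  have hMV : ∀ i : Fin (m + 1), (q i).1 ∈ C.MV 1 :=
    fun i => (hD.subset 1 le_rfl (by omega) (hq i)).1
  set s := Equiv.swap (⟨k, by omega⟩ : Fin (m + 1)) ⟨k + 1, hk⟩ with hs
  rcases Nat.lt_or_ge (k + 1) m with hlt | hge
  · -- both positions inside the list part
    have e_last : (q ∘ s) (Fin.last m) = q (Fin.last m) := by
      simp only [Function.comp_apply, hs]
      congr 1
      have h1 : Fin.last m ≠ ⟨k, by omega⟩ := by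
        simp only [ne_eq, Fin.ext_iff, Fin.val_last]; omega
      have h2 : Fin.last m ≠ ⟨k + 1, hk⟩ := by
        simp only [ne_eq, Fin.ext_iff, Fin.val_last]; omega
      rw [Equiv.swap_apply_of_ne_of_ne h1 h2]
    have e_fun : (fun i : Fin m => ((q ∘ s) i.castSucc).1) =
        (fun i : Fin m => (q i.castSucc).1) ∘ Equiv.swap (⟨k, by omega⟩ : Fin m) ⟨k + 1, hlt⟩ := by
      funext i
      simp only [Function.comp_apply, hs]
      congr 2
      rcases eq_or_ne i ⟨k, by omega⟩ with rfl | h1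
      · rw [Equiv.swap_apply_left]
        have h0 : Fin.castSucc (⟨k, by omega⟩ : Fin m) = ⟨k, by omega⟩ := rfl
        rw [h0, Equiv.swap_apply_left]
        simp [Fin.ext_iff]
      · rcases eq_or_ne i ⟨k + 1, hlt⟩ with rfl | h2
        · rw [Equiv.swap_apply_right]
          have h0 : Fin.castSucc (⟨k + 1, hlt⟩ : Fin m) = ⟨k + 1, hk⟩ := rfl
          rw [h0, Equiv.swap_apply_right]
          simp [Fin.ext_iff]
        · have h1' : Fin.castSucc i ≠ ⟨k, by omega⟩ := by
            simp only [ne_eq, Fin.ext_iff, Fin.coe_castSucc] at h1 ⊢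
            omega
          have h2' : Fin.castSucc i ≠ ⟨k + 1, hk⟩ := by
            simp only [ne_eq, Fin.ext_iff, Fin.coe_castSucc] at h2 ⊢
            omega
          rw [Equiv.swap_apply_of_ne_of_ne h1 h2,
            Equiv.swap_apply_of_ne_of_ne h1' h2']
    rw [OmD_eq_Wf, OmD_eq_Wf, e_fun, e_last,
      C.Wf_swap_adj k hlt _ (fun i => hMV _)]
  · -- swap of the last two positions: k + 1 = m
    have hm : m = k + 1 := by omega
    subst hm
    have e_last : (q ∘ s) (Fin.last (k + 1)) = q ⟨k, by omega⟩ := by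
      simp only [Function.comp_apply, hs]
      congr 1
      have h0 : Fin.last (k + 1) = (⟨k + 1, hk⟩ : Fin (k + 2)) := by simp [Fin.ext_iff]
      rw [h0, Equiv.swap_apply_right]
    have e_lastv : ((q ∘ s) (Fin.castSucc (Fin.last k))).1 = (q (Fin.last (k + 1))).1 := by
      simp only [Function.comp_apply, hs]
      congr 2
      have h0 : Fin.castSucc (Fin.last k) = (⟨k, by omega⟩ : Fin (k + 2)) := by
        simp [Fin.ext_iff]
      rw [h0, Equiv.swap_apply_left]
      simp [Fin.ext_iff]
    have e_lastv' : (q (Fin.castSucc (Fin.last k))).1 = (q ⟨k, by omega⟩).1 := by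
      congr 2
    have e_fun : (fun i : Fin (k + 1) => ((q ∘ s) i.castSucc).1) ∘ Fin.castSucc =
        (fun i : Fin (k + 1) => (q i.castSucc).1) ∘ Fin.castSucc := by
      funext i
      simp only [Function.comp_apply, hs]
      congr 2
      have h1 : Fin.castSucc (Fin.castSucc i) ≠ (⟨k, by omega⟩ : Fin (k + 2)) := by
        have := i.isLt
        simp only [ne_eq, Fin.ext_iff, Fin.coe_castSucc]
        omega
      have h2 : Fin.castSucc (Fin.castSucc i) ≠ (⟨k + 1, hk⟩ : Fin (k + 2)) := by
        have := i.isLt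
        simp only [ne_eq, Fin.ext_iff, Fin.coe_castSucc]
        omega
      rw [Equiv.swap_apply_of_ne_of_ne h1 h2]
    have hu : ∀ i : Fin k,
        ((fun i : Fin (k + 1) => (q i.castSucc).1) ∘ Fin.castSucc) i ∈ C.MV 1 :=
      fun i => hMV _
    rw [OmD_eq_Wf, OmD_eq_Wf, Wf_last, Wf_last, e_fun, e_last, e_lastv, e_lastv',
      C.iota_Wf _ (hMV (Fin.last (k + 1))) _ hu,
      C.iota_Wf _ (hMV ⟨k, by omega⟩) _ hu,
      C.isotropy hD (hq ⟨k, by omega⟩) (hq (Fin.last (k + 1))), Wf_neg]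
    simp

lemma OmD_swap_lt {m : ℕ} {D : ℕ → Set (X × F)} (hD : C.IsMultiDirac (m + 1) D) :
    ∀ (d : ℕ) (x y : Fin (m + 1)), (y : ℕ) = (x : ℕ) + d + 1 →
    ∀ q : Fin (m + 1) → X × F, (∀ i, q i ∈ D 1) →
    C.OmD m (q ∘ Equiv.swap x y) = - C.OmD m q := by
  intro d
  induction d with
  | zero =>
    intro x y hxy q hq
    have hyl : (y : ℕ) < m + 1 := y.isLt
    have hk : (x : ℕ) + 1 < m + 1 := by omega
    have hy : y = ⟨(x : ℕ) + 1, hk⟩ := Fin.ext (by simpa using hxy)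
    rw [hy]
    exact C.OmD_swap_adj hD (x : ℕ) hk q hq
  | succ d ih =>
    intro x y hxy q hq
    have hyl : (y : ℕ) < m + 1 := y.isLt
    have hx1 : (x : ℕ) + 1 < m + 1 := by omega
    set b : Fin (m + 1) := ⟨(x : ℕ) + 1, hx1⟩ with hb
    have hbv : (b : ℕ) = (x : ℕ) + 1 := rfl
    have hby : (y : ℕ) = (b : ℕ) + d + 1 := by omega
    have hxyne : (x : ℕ) ≠ (y : ℕ) := by omega
    have key : (q ∘ Equiv.swap x y) =
        (((q ∘ Equiv.swap b y) ∘ Equiv.swap x b) ∘ Equiv.swap b y) := by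
      have hxb : x ≠ b := by simp only [ne_eq, Fin.ext_iff]; omega
      have hbx : b ≠ x := by simp only [ne_eq, Fin.ext_iff]; omega
      have hxy' : x ≠ y := by simp only [ne_eq, Fin.ext_iff]; omega
      have hyx : y ≠ x := by simp only [ne_eq, Fin.ext_iff]; omega
      have hby' : b ≠ y := by simp only [ne_eq, Fin.ext_iff]; omega
      have hyb : y ≠ b := by simp only [ne_eq, Fin.ext_iff]; omega
      funext z
      simp only [Function.comp_apply]
      congr 1
      rcases eq_or_ne z x with rfl | hzx
      · rw [Equiv.swap_apply_left, Equiv.swap_apply_of_ne_of_ne hxb hxy',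
          Equiv.swap_apply_left, Equiv.swap_apply_left]
      · rcases eq_or_ne z b with rfl | hzb
        · rw [Equiv.swap_apply_of_ne_of_ne hbx hby', Equiv.swap_apply_left,
            Equiv.swap_apply_of_ne_of_ne hyx hyb, Equiv.swap_apply_right]
        · rcases eq_or_ne z y with rfl | hzy
          · rw [Equiv.swap_apply_right, Equiv.swap_apply_right,
              Equiv.swap_apply_right, Equiv.swap_apply_of_ne_of_ne hxb hxy']
          · rw [Equiv.swap_apply_of_ne_of_ne hzx hzy,
              Equiv.swap_apply_of_ne_of_ne hzb hzy,
              Equiv.swap_apply_of_ne_of_ne hzx hzb,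
              Equiv.swap_apply_of_ne_of_ne hzb hzy]
    rw [key,
      ih b y hby ((q ∘ Equiv.swap b y) ∘ Equiv.swap x b) (fun i => hq _),
      show Equiv.swap x b = Equiv.swap ⟨(x : ℕ), x.isLt⟩ ⟨(x : ℕ) + 1, hx1⟩ from rfl,
      C.OmD_swap_adj hD (x : ℕ) hx1 (q ∘ Equiv.swap b y) (fun i => hq _),
      ih b y hby q hq]
    simp

lemma OmD_swap {m : ℕ} {D : ℕ → Set (X × F)} (hD : C.IsMultiDirac (m + 1) D)
    (x y : Fin (m + 1)) (hxy : x ≠ y)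
    (q : Fin (m + 1) → X × F) (hq : ∀ i, q i ∈ D 1) :
    C.OmD m (q ∘ Equiv.swap x y) = - C.OmD m q := by
  rcases lt_or_gt_of_ne hxy with h | h
  · have h' : (x : ℕ) < (y : ℕ) := h
    exact C.OmD_swap_lt hD ((y : ℕ) - (x : ℕ) - 1) x y (by omega) q hq
  · have h' : (y : ℕ) < (x : ℕ) := h
    rw [Equiv.swap_comm]
    exact C.OmD_swap_lt hD ((x : ℕ) - (y : ℕ) - 1) y x (by omega) q hq

end MultiCalc

/-- The `n`-form `Ω_D(v_1,…,v_n) := α_n(v_1,…,v_{n-1})` built from sections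
`(v_i, α_i)` of `D_1` is totally antisymmetric in its arguments
(here `n = m + 1`). -/
theorem OmD_antisymmetric {A X F : Type} [CommRing A] [Algebra ℝ A]
    [AddCommGroup X] [AddCommGroup F] [Module ℝ X] [Module ℝ F]
    [Module A X] [Module A F] [IsScalarTower ℝ A X] [IsScalarTower ℝ A F]
    (C : MultiCalc A X F)
    (m : ℕ) (D : ℕ → Set (X × F)) (hD : C.IsMultiDirac (m + 1) D)
    (p : Fin (m + 1) → X × F) (hp : ∀ i, p i ∈ D 1)
    (σ : Equiv.Perm (Fin (m + 1))) :
    C.OmD m (p ∘ σ) = (Equiv.Perm.sign σ : ℤ) • C.OmD m p := by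
  have h1 : ∀ q : Fin (m + 1) → X × F, (∀ i, q i ∈ D 1) →
      C.OmD m (q ∘ ⇑(1 : Equiv.Perm (Fin (m + 1)))) =
        (Equiv.Perm.sign (1 : Equiv.Perm (Fin (m + 1))) : ℤ) • C.OmD m q := by
    intro q hq
    simp
  have hstep : ∀ (f : Equiv.Perm (Fin (m + 1))) (x y : Fin (m + 1)), x ≠ y →
      (∀ q : Fin (m + 1) → X × F, (∀ i, q i ∈ D 1) →
        C.OmD m (q ∘ ⇑f) = (Equiv.Perm.sign f : ℤ) • C.OmD m q) →
      ∀ q : Fin (m + 1) → X × F, (∀ i, q i ∈ D 1) →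
        C.OmD m (q ∘ ⇑(f * Equiv.swap x y)) =
          (Equiv.Perm.sign (f * Equiv.swap x y) : ℤ) • C.OmD m q := by
    intro f x y hxy ihf q hq
    have hcomp : q ∘ ⇑(f * Equiv.swap x y) = (q ∘ ⇑f) ∘ ⇑(Equiv.swap x y) := by
      funext z
      simp [Equiv.Perm.mul_apply]
    rw [hcomp, C.OmD_swap hD x y hxy (q ∘ ⇑f) (fun i => hq _), ihf q hq,
      Equiv.Perm.sign_mul, Equiv.Perm.sign_swap hxy]
    push_cast
    rw [mul_smul]
    simp
  exact Equiv.Perm.swap_induction_on'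
    (motive := fun τ => ∀ q : Fin (m + 1) → X × F, (∀ i, q i ∈ D 1) →
      C.OmD m (q ∘ ⇑τ) = (Equiv.Perm.sign τ : ℤ) • C.OmD m q)
    σ h1 hstep p hp
end
end
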